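/- Let φ be a polynomial self-map of ℂ sending the closed upper half-plane into itself (φ(ℂ₊) ⊆ ℂ₊) such that sup_{z ∈ ℂ₊} Im(z)/Im(φ(z)) < ∞. Then φ has degree at most 1, i.e., φ is affine. -/

import Mathlib

open Complex

-- Choice of an angle θ ∈ (0, π) making sin (n θ + β) strictly negative, for n ≥ 2.
lemma angle_choice (n : ℕ) (hn : 2 ≤ n) (β : ℝ) (hβ1 : -Real.pi < β) (hβ2 : β ≤ Real.pi) :
    ∃ θ : ℝ, 0 < θ ∧ θ < Real.pi ∧ Real.sin (n * θ + β) < 0 := by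
  have hπ : (0:ℝ) < Real.pi := Real.pi_pos
  have hn' : (2:ℝ) ≤ (n:ℝ) := by exact_mod_cast hn
  have hnpos : (0:ℝ) < n := by linarith
  rcases lt_or_ge β 0 with hβ | hβ
  · refine ⟨-β / (2 * n), div_pos (by linarith) (by positivity), ?_, ?_⟩
    · rw [div_lt_iff₀ (by positivity)]
      nlinarith
    · have harg : (n:ℝ) * (-β / (2 * n)) + β = β / 2 := by field_simp; ring
      rw [harg]
      exact Real.sin_neg_of_neg_of_neg_pi_lt (by linarith) (by linarith)
  · refine ⟨(Real.pi + (Real.pi - 2*β)/3) / n, div_pos (by linarith) hnpos, ?_, ?_⟩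
    · rw [div_lt_iff₀ hnpos]
      nlinarith
    · have harg : (n:ℝ) * ((Real.pi + (Real.pi - 2*β)/3) / n) + β
          = Real.pi + (Real.pi + β)/3 := by field_simp; ring
      rw [harg, Real.sin_add]
      simp only [Real.sin_pi, Real.cos_pi, zero_mul, neg_one_mul, zero_add, neg_lt_zero]
      exact Real.sin_pos_of_pos_of_lt_pi (by linarith) (by linarith)

theorem stmt12 (p : Polynomial ℂ) (M : ℝ) (hM : 0 < M)
    (hmap : ∀ z : ℂ, 0 < z.im → 0 < (p.eval z).im)
    (hbd : ∀ z : ℂ, 0 < z.im → z.im ≤ M * (p.eval z).im) :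
    p.degree ≤ 1 := by
  by_contra hdeg
  push_neg at hdeg
  have hp0 : p ≠ 0 := by rintro rfl; simp at hdeg
  have hn2 : 2 ≤ p.natDegree := by
    have h := Polynomial.degree_eq_natDegree hp0
    rw [h] at hdeg
    exact_mod_cast hdeg
  set n := p.natDegree with hn
  set a := p.leadingCoeff with ha
  have ha0 : a ≠ 0 := Polynomial.leadingCoeff_ne_zero.mpr hp0
  have haabs : 0 < ‖a‖ := norm_pos_iff.mpr ha0
  set β := Complex.arg a with hβ
  obtain ⟨θ, hθ0, hθπ, hsin⟩ :=
    angle_choice n hn2 β (Complex.neg_pi_lt_arg a) (Complex.arg_le_pi a)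
  set c : ℝ := -Real.sin (n * θ + β) with hc
  have hc0 : 0 < c := by simp [hc]; linarith
  set S : ℝ := ∑ i ∈ Finset.range n, ‖p.coeff i‖ with hS
  have hS0 : 0 ≤ S := Finset.sum_nonneg fun i _ => by positivity
  set R : ℝ := max 1 ((S + 1) / (c * ‖a‖)) with hR
  have hR1 : (1:ℝ) ≤ R := le_max_left _ _
  have hR0 : (0:ℝ) < R := by linarith
  have hca : 0 < c * ‖a‖ := mul_pos hc0 haabs
  have hR2 : S + 1 ≤ c * ‖a‖ * R := by
    have h := le_max_right 1 ((S + 1) / (c * ‖a‖))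
    rw [div_le_iff₀ hca, ← hR] at h
    calc S + 1 ≤ R * (c * ‖a‖) := h
      _ = c * ‖a‖ * R := by ring
  set z : ℂ := (R : ℂ) * Complex.exp (θ * Complex.I) with hz
  have hzim : z.im = R * Real.sin θ := by
    simp [hz, Complex.mul_im, Complex.exp_ofReal_mul_I_im, Complex.exp_ofReal_mul_I_re]
  have hzimpos : 0 < z.im := by
    rw [hzim]
    exact mul_pos hR0 (Real.sin_pos_of_pos_of_lt_pi hθ0 hθπ)
  have hzabs : ‖z‖ = R := by
    simp [hz, Complex.norm_exp, abs_of_pos hR0]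
  -- leading term
  have hlead : (a * z ^ n).im = ‖a‖ * R ^ n * Real.sin (n * θ + β) := by
    have h1 : a = (‖a‖ : ℂ) * Complex.exp (β * Complex.I) :=
      (Complex.norm_mul_exp_arg_mul_I a).symm
    have h2 : z ^ n = (R ^ n : ℝ) * Complex.exp ((n * θ : ℝ) * Complex.I) := by
      rw [hz, mul_pow, ← Complex.exp_nat_mul]
      push_cast
      ring_nf
    have key : a * z ^ n = ((‖a‖ * R ^ n : ℝ) : ℂ) *
        Complex.exp ((((n : ℝ) * θ + β : ℝ) : ℂ) * Complex.I) := by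
      rw [h2]
      nth_rewrite 1 [h1]
      rw [show ((((n : ℝ) * θ + β : ℝ) : ℂ) * Complex.I)
          = (β : ℂ) * Complex.I + (((n : ℝ) * θ : ℝ) : ℂ) * Complex.I by push_cast; ring,
        Complex.exp_add]
      push_cast
      ring
    rw [key, Complex.mul_im, Complex.exp_ofReal_mul_I_im, Complex.exp_ofReal_mul_I_re,
      Complex.ofReal_re, Complex.ofReal_im]
    ring
  -- decomposition of the evaluation
  have heval : p.eval z = a * z ^ n + ∑ i ∈ Finset.range n, p.coeff i * z ^ i := by
    rw [Polynomial.eval_eq_sum_range, Finset.sum_range_succ, ← hn,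
      Polynomial.coeff_natDegree, ← ha]
    ring
  -- bound for the lower order part
  obtain ⟨m, hm⟩ : ∃ m, n = m + 1 := ⟨n - 1, by omega⟩
  have hlow : |(∑ i ∈ Finset.range n, p.coeff i * z ^ i).im| ≤ S * R ^ m := by
    calc |(∑ i ∈ Finset.range n, p.coeff i * z ^ i).im|
        ≤ ‖∑ i ∈ Finset.range n, p.coeff i * z ^ i‖ :=
          Complex.abs_im_le_norm _
      _ ≤ ∑ i ∈ Finset.range n, ‖p.coeff i * z ^ i‖ :=
          norm_sum_le _ _
      _ ≤ ∑ i ∈ Finset.range n, ‖p.coeff i‖ * R ^ m := by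
          apply Finset.sum_le_sum
          intro i hi
          rw [norm_mul, norm_pow, hzabs]
          have : R ^ i ≤ R ^ m :=
            pow_le_pow_right₀ hR1 (by simp [hm] at hi; omega)
          exact mul_le_mul_of_nonneg_left this (by positivity)
      _ = S * R ^ m := by rw [hS, ← Finset.sum_mul]
  -- final contradiction
  have hfinal : (p.eval z).im < 0 := by
    rw [heval]
    have h3 : (a * z ^ n + ∑ i ∈ Finset.range n, p.coeff i * z ^ i).im
        = (a * z ^ n).im + (∑ i ∈ Finset.range n, p.coeff i * z ^ i).im := by
      simp [Complex.add_im]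
    rw [h3, hlead]
    have hsin' : Real.sin (n * θ + β) = -c := by rw [hc]; ring
    rw [hsin']
    have hRn : R ^ n = R ^ m * R := by rw [hm]; ring
    have habs' : (∑ i ∈ Finset.range n, p.coeff i * z ^ i).im ≤ S * R ^ m :=
      le_trans (le_abs_self _) hlow
    have hRm : (0:ℝ) < R ^ m := by positivity
    have h4 : (S + 1) * R ^ m ≤ c * ‖a‖ * R * R ^ m :=
      mul_le_mul_of_nonneg_right hR2 hRm.le
    rw [hRn]
    nlinarith [h4, habs', hRm]
  linarith [hmap z hzimpos, hfinal]
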